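/- A diagonal function δ is an extreme point of the convex set of diagonal sections of semilinear semi-copulas if and only if there exists a ∈ [0,1] such that δ = δ_a^R or δ = δ_a^L, where δ_a^R(x) = 0 for 0 ≤ x < a and δ_a^R(x) = x for a ≤ x ≤ 1, and δ_a^L(x) = 0 for 0 ≤ x ≤ a and δ_a^L(x) = x for a < x ≤ 1. -/
import Mathlib


/-- Diagonal section of a semilinear semi-copula. -/
def IsSemiCopulaDiagonal (d : ℝ → ℝ) : Prop :=
  MonotoneOn d (Set.Icc 0 1) ∧ (∀ x ∈ Set.Icc (0:ℝ) 1, 0 ≤ d x ∧ d x ≤ x) ∧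
  d 1 = 1 ∧ MonotoneOn (fun x => d x / x) (Set.Ioc (0:ℝ) 1)

/-- Extreme point (midpoint characterization) of the set of semilinear
semi-copula diagonals, with functions compared on `[0,1]`. -/
def IsExtremeSemiDiag (d : ℝ → ℝ) : Prop :=
  IsSemiCopulaDiagonal d ∧
  ∀ d₁ d₂ : ℝ → ℝ, IsSemiCopulaDiagonal d₁ → IsSemiCopulaDiagonal d₂ →
    (∀ x ∈ Set.Icc (0:ℝ) 1, d x = (d₁ x + d₂ x) / 2) →
    ∀ x ∈ Set.Icc (0:ℝ) 1, d₁ x = d₂ x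

/-- First perturbation `x ↦ (1-c)·d x + min (d x) (c·x)` is again a diagonal. -/
lemma aux_d1 (d : ℝ → ℝ) (hd : IsSemiCopulaDiagonal d) (c : ℝ) (hc0 : 0 ≤ c)
    (hc1 : c ≤ 1) :
    IsSemiCopulaDiagonal (fun x => (1 - c) * d x + min (d x) (c * x)) := by
  obtain ⟨hmono, hbd, h1, hrat⟩ := hd
  refine ⟨?_, ?_, ?_, ?_⟩
  · intro x hx y hy hxy
    have hdxy : d x ≤ d y := hmono hx hy hxy
    have h1c : (0:ℝ) ≤ 1 - c := by linarith
    have hm : min (d x) (c * x) ≤ min (d y) (c * y) :=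
      min_le_min hdxy (by nlinarith)
    have := mul_le_mul_of_nonneg_left hdxy h1c
    dsimp only
    linarith
  · intro x hx
    obtain ⟨hdx0, hdxx⟩ := hbd x hx
    have hx0 : (0:ℝ) ≤ x := hx.1
    dsimp only
    constructor
    · have : (0:ℝ) ≤ min (d x) (c * x) := le_min hdx0 (by positivity)
      nlinarith
    · have : min (d x) (c * x) ≤ c * x := min_le_right _ _
      nlinarith
  · simp only [h1, mul_one]
    rw [min_eq_right hc1]; ring
  · intro x hx y hy hxy
    have hx0 : (0:ℝ) < x := hx.1
    have hy0 : (0:ℝ) < y := hy.1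
    have hdxy : d x * y ≤ d y * x := (div_le_div_iff₀ hx0 hy0).mp (hrat hx hy hxy)
    have hdx0 := (hbd x ⟨hx0.le, hx.2⟩).1
    have hdy0 := (hbd y ⟨hy0.le, hy.2⟩).1
    dsimp only
    rw [div_le_div_iff₀ hx0 hy0]
    have h1c : (0:ℝ) ≤ 1 - c := by linarith
    have key := mul_le_mul_of_nonneg_left hdxy h1c
    rcases le_total (d x) (c * x) with h | h <;>
      rcases le_total (d y) (c * y) with h' | h'
    · rw [min_eq_left h, min_eq_left h']; nlinarith
    · rw [min_eq_left h, min_eq_right h']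
      have : d x * y ≤ c * x * y := by nlinarith
      nlinarith
    · -- impossible-ish case: d x ≥ c x, d y ≤ c y
      rw [min_eq_right h, min_eq_left h']
      have h2 : c * x * y ≤ d x * y := by nlinarith
      have h3 : d y * x ≤ c * y * x := by nlinarith
      nlinarith
    · rw [min_eq_right h, min_eq_right h']; nlinarith

/-- Second perturbation `x ↦ (1+c)·d x - min (d x) (c·x)` is again a diagonal. -/
lemma aux_d2 (d : ℝ → ℝ) (hd : IsSemiCopulaDiagonal d) (c : ℝ) (hc0 : 0 ≤ c)
    (hc1 : c ≤ 1) :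
    IsSemiCopulaDiagonal (fun x => (1 + c) * d x - min (d x) (c * x)) := by
  obtain ⟨hmono, hbd, h1, hrat⟩ := hd
  have hd0 : d 0 = 0 := by
    have := hbd 0 ⟨le_refl _, zero_le_one⟩
    linarith [this.1, this.2]
  have hbnd : ∀ x ∈ Set.Icc (0:ℝ) 1,
      0 ≤ (1 + c) * d x - min (d x) (c * x) ∧
      (1 + c) * d x - min (d x) (c * x) ≤ x := by
    intro x hx
    obtain ⟨hdx0, hdxx⟩ := hbd x hx
    have hx0 : (0:ℝ) ≤ x := hx.1
    constructor
    · have : min (d x) (c * x) ≤ d x := min_le_left _ _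
      nlinarith
    · rcases le_total (d x) (c * x) with h | h
      · rw [min_eq_left h]; nlinarith
      · rw [min_eq_right h]; nlinarith
  have hratm : MonotoneOn
      (fun x => ((1 + c) * d x - min (d x) (c * x)) / x) (Set.Ioc (0:ℝ) 1) := by
    intro x hx y hy hxy
    have hx0 : (0:ℝ) < x := hx.1
    have hy0 : (0:ℝ) < y := hy.1
    have hdxy : d x * y ≤ d y * x := (div_le_div_iff₀ hx0 hy0).mp (hrat hx hy hxy)
    have hdx0 := (hbd x ⟨hx0.le, hx.2⟩).1
    have hdy0 := (hbd y ⟨hy0.le, hy.2⟩).1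
    dsimp only
    rw [div_le_div_iff₀ hx0 hy0]
    have key := mul_le_mul_of_nonneg_left hdxy hc0
    rcases le_total (d x) (c * x) with h | h <;>
      rcases le_total (d y) (c * y) with h' | h'
    · rw [min_eq_left h, min_eq_left h']; nlinarith
    · rw [min_eq_left h, min_eq_right h']
      have : c * y * x ≤ d y * x := by nlinarith
      nlinarith
    · rw [min_eq_right h, min_eq_left h']
      have h2 : c * x * y ≤ d x * y := by nlinarith
      have h3 : d y * x ≤ c * y * x := by nlinarith
      nlinarith
    · rw [min_eq_right h, min_eq_right h']; nlinarith
  refine ⟨?_, hbnd, ?_, hratm⟩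
  · -- monotone on [0,1], deduced from ratio monotonicity and nonnegativity
    intro x hx y hy hxy
    dsimp only
    rcases eq_or_lt_of_le hx.1 with h0 | h0
    · rw [← h0, hd0]
      have h2 := (hbnd y hy).1
      simp only [mul_zero, min_self]
      linarith
    · have hy0 : (0:ℝ) < y := lt_of_lt_of_le h0 hxy
      have hr := hratm ⟨h0, hx.2⟩ ⟨hy0, hy.2⟩ hxy
      dsimp only at hr
      rw [div_le_div_iff₀ h0 hy0] at hr
      have h2 := (hbnd y hy).1
      nlinarith
  · simp only [h1, mul_one]
    rw [min_eq_right hc1]; ring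

/-- Extreme diagonals take only values `0` or `x`. -/
lemma key_zero_or_id (d : ℝ → ℝ) (hext : IsExtremeSemiDiag d) :
    ∀ x ∈ Set.Icc (0:ℝ) 1, d x = 0 ∨ d x = x := by
  obtain ⟨hd, hext⟩ := hext
  obtain ⟨hmono, hbd, h1, hrat⟩ := hd
  intro x₀ hx₀
  by_contra hcon
  push_neg at hcon
  obtain ⟨hne0, hnex⟩ := hcon
  obtain ⟨hdx0, hdxx⟩ := hbd x₀ hx₀
  have hdpos : 0 < d x₀ := lt_of_le_of_ne hdx0 (Ne.symm hne0)
  have hdlt : d x₀ < x₀ := lt_of_le_of_ne hdxx hnex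
  have hx0pos : 0 < x₀ := lt_of_le_of_lt hdx0 hdlt
  set c : ℝ := d x₀ / x₀ with hc
  have hc0 : 0 < c := div_pos hdpos hx0pos
  have hc1 : c < 1 := (div_lt_one hx0pos).mpr hdlt
  have h₁ := aux_d1 d ⟨hmono, hbd, h1, hrat⟩ c hc0.le hc1.le
  have h₂ := aux_d2 d ⟨hmono, hbd, h1, hrat⟩ c hc0.le hc1.le
  have havg : ∀ x ∈ Set.Icc (0:ℝ) 1,
      d x = (((1 - c) * d x + min (d x) (c * x)) +
             ((1 + c) * d x - min (d x) (c * x))) / 2 := by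
    intro x _; ring
  have heq := hext _ _ h₁ h₂ havg x₀ hx₀
  have hcx : c * x₀ = d x₀ := div_mul_cancel₀ _ (ne_of_gt hx0pos)
  simp only [hcx, min_self] at heq
  nlinarith

theorem extreme_semicopula_diagonals (d : ℝ → ℝ) (hd : IsSemiCopulaDiagonal d) :
    IsExtremeSemiDiag d ↔
      ∃ a ∈ Set.Icc (0:ℝ) 1,
        (∀ x ∈ Set.Icc (0:ℝ) 1, d x = if x < a then 0 else x) ∨
        (∀ x ∈ Set.Icc (0:ℝ) 1, d x = if x ≤ a then 0 else x) := by
  obtain ⟨hmono, hbd, h1, hrat⟩ := hd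
  constructor
  · intro hext
    have h01 := key_zero_or_id d hext
    set A : Set ℝ := {x | x ∈ Set.Icc (0:ℝ) 1 ∧ d x = 0} with hA
    have hd0 : d 0 = 0 := by
      have := hbd 0 ⟨le_refl _, zero_le_one⟩
      linarith [this.1, this.2]
    have h0A : (0:ℝ) ∈ A := ⟨⟨le_refl _, zero_le_one⟩, hd0⟩
    have hAne : A.Nonempty := ⟨0, h0A⟩
    have hAbdd : BddAbove A := ⟨1, fun x hx => hx.1.2⟩
    set a : ℝ := sSup A with ha
    have ha0 : 0 ≤ a := le_csSup hAbdd h0A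
    have ha1 : a ≤ 1 := csSup_le hAne (fun x hx => hx.1.2)
    have haI : a ∈ Set.Icc (0:ℝ) 1 := ⟨ha0, ha1⟩
    have claim1 : ∀ x ∈ Set.Icc (0:ℝ) 1, x < a → d x = 0 := by
      intro x hx hxa
      obtain ⟨y, hyA, hxy⟩ := exists_lt_of_lt_csSup hAne hxa
      have h2 : d x ≤ d y := hmono hx hyA.1 hxy.le
      have h3 := (hbd x hx).1
      rw [hyA.2] at h2
      linarith
    have claim2 : ∀ x ∈ Set.Icc (0:ℝ) 1, a < x → d x = x := by
      intro x hx hax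
      have hxA : x ∉ A := fun hxA => absurd (le_csSup hAbdd hxA) (not_le.mpr hax)
      rcases h01 x hx with h | h
      · exact absurd ⟨hx, h⟩ hxA
      · exact h
    refine ⟨a, haI, ?_⟩
    rcases h01 a haI with hda | hda
    · right
      intro x hx
      rcases le_or_gt x a with hxa | hxa
      · rw [if_pos hxa]
        have h2 : d x ≤ d a := hmono hx haI hxa
        have h3 := (hbd x hx).1
        rw [hda] at h2
        linarith
      · rw [if_neg (not_le.mpr hxa)]
        exact claim2 x hx hxa
    · left
      intro x hx
      rcases lt_or_ge x a with hxa | hxa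
      · rw [if_pos hxa]
        exact claim1 x hx hxa
      · rw [if_neg (not_lt.mpr hxa)]
        rcases eq_or_lt_of_le hxa with h | h
        · rw [← h]; exact hda
        · exact claim2 x hx h
  · rintro ⟨a, _, hf⟩
    have h01 : ∀ x ∈ Set.Icc (0:ℝ) 1, d x = 0 ∨ d x = x := by
      intro x hx
      rcases hf with hf | hf
      · rw [hf x hx]; split <;> simp
      · rw [hf x hx]; split <;> simp
    refine ⟨⟨hmono, hbd, h1, hrat⟩, ?_⟩
    intro d₁ d₂ hd₁ hd₂ havg x hx
    have h₁ := hd₁.2.1 x hx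
    have h₂ := hd₂.2.1 x hx
    have heq := havg x hx
    rcases h01 x hx with h | h <;> rw [h] at heq <;> linarith [h₁.1, h₁.2, h₂.1, h₂.2]
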